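/- The discretized test operator is close to the exact one in operator norm: ‖Ω_h(𝒜) − Ω(𝒜)‖ ≤ (Σ_{l=1}^m |A_l|/m) sin(π/(4h)) = (n/m) sin(π/(4h)). -/

import Mathlib

open scoped BigOperators ComplexOrder
open Matrix Complex

noncomputable section

/-- Computational-basis index set of `(ℂ²)^{⊗n}`. -/
abbrev QIdx (n : ℕ) := Fin n → Fin 2

/-- Linear operators on `(ℂ²)^{⊗n}`, represented as matrices. -/
abbrev QOp (n : ℕ) := Matrix (QIdx n) (QIdx n) ℂ

/-- A bit viewed as a real number. -/
def bR (b : Fin 2) : ℝ := (b : ℕ)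

/-- The ℓ²→ℓ² operator norm of a matrix. -/
noncomputable def opNorm {ι : Type*} [Fintype ι] [DecidableEq ι] (M : Matrix ι ι ℂ) : ℝ :=
  ‖Matrix.toEuclideanCLM (𝕜 := ℂ) M‖

/-- The weighted graph state `|G⟩`, as amplitudes
`⟨z|G⟩ = 2^{-n/2} ∏_{j<k} e^{i θ_{jk} z_j z_k}` (for symmetric `θ`,
`∑_{j<k} = (1/2) ∑_{j,k}`). -/
noncomputable def gVec (n : ℕ) (θ : Fin n → Fin n → ℝ) : QIdx n → ℂ :=
  fun z => ((Real.sqrt (2 ^ n))⁻¹ : ℝ) *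
    Complex.exp (Complex.I * ((1 / 2 * ∑ j, ∑ k, θ j k * bR (z j) * bR (z k) : ℝ) : ℂ))

/-- The rank-one projection `|G⟩⟨G|`. -/
noncomputable def gProj (n : ℕ) (θ : Fin n → Fin n → ℝ) : QOp n :=
  Matrix.vecMulVec (gVec n θ) (star (gVec n θ))

/-- `α_k(z) = ∑_{j ∈ C_k} θ_{jk} z_j` (using `θ_{jk} = 0` on non-edges). -/
noncomputable def alphaAngle (n : ℕ) (θ : Fin n → Fin n → ℝ) (k : Fin n) (z : QIdx n) : ℝ :=
  ∑ j, θ j k * bR (z j)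

/-- The discretization `α ↦ α^h`, the unique point `jπ/h` with
`jπ/h - π/(2h) ≤ α < jπ/h + π/(2h)`. -/
noncomputable def alphaH (h : ℕ) (α : ℝ) : ℝ :=
  (⌊(h : ℝ) * α / Real.pi + 1 / 2⌋ : ℤ) * Real.pi / h

/-- Matrix entry `⟨b|α⟩⟨α|b'⟩ = (1/2) e^{iα(b-b')}` of the projection onto
`|α⟩ = (|0⟩ + e^{iα}|1⟩)/√2`. -/
noncomputable def phaseFac (α : ℝ) (b b' : Fin 2) : ℂ :=
  (1 / 2 : ℂ) * Complex.exp (Complex.I * ((α * (bR b - bR b') : ℝ) : ℂ))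

/-- The projection `P_l = ∏_{k ∈ A_l} Q_k`, written out entrywise:
`P_l = ∑_z (⊗_{k∈A_l} |α_k(z)⟩⟨α_k(z)|) ⊗ |z⟩⟨z|_{A_l^c}`. -/
noncomputable def Pop (n : ℕ) (θ : Fin n → Fin n → ℝ) (A : Finset (Fin n)) : QOp n :=
  Matrix.of fun x y =>
    if ∀ j ∉ A, x j = y j then ∏ k ∈ A, phaseFac (alphaAngle n θ k x) (x k) (y k) else 0

/-- The test operator `Ω(𝒜) = (1/m) ∑_l P_l`. -/
noncomputable def OmegaA (n m : ℕ) (θ : Fin n → Fin n → ℝ) (A : Fin m → Finset (Fin n)) :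
    QOp n :=
  (m : ℂ)⁻¹ • ∑ l, Pop n θ (A l)

/-- The discretized projection `P_{l;h}` (replace `α_k(z)` by `α_k^h(z)`). -/
noncomputable def PopH (n : ℕ) (θ : Fin n → Fin n → ℝ) (h : ℕ) (A : Finset (Fin n)) : QOp n :=
  Matrix.of fun x y =>
    if ∀ j ∉ A, x j = y j then
      ∏ k ∈ A, phaseFac (alphaH h (alphaAngle n θ k x)) (x k) (y k) else 0

/-- The discretized test operator `Ω_h(𝒜) = (1/m) ∑_l P_{l;h}`. -/
noncomputable def OmegaAH (n m : ℕ) (θ : Fin n → Fin n → ℝ) (h : ℕ)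
    (A : Fin m → Finset (Fin n)) : QOp n :=
  (m : ℂ)⁻¹ • ∑ l, PopH n θ h (A l)

/-- Entry of the single-site operator `(1/h) |α⟩⟨α| + (1 - 1/h) I`. -/
noncomputable def mixFac (h : ℕ) (α : ℝ) (b b' : Fin 2) : ℂ :=
  (1 - (h : ℂ)⁻¹) * (if b = b' then 1 else 0) + (h : ℂ)⁻¹ * phaseFac α b b'

/-- `P̄_l = ∏_{k ∈ A_l} ((1/h(k)) Q_k + (1 - 1/h(k)) I)`, written out entrywise. -/
noncomputable def PBar (n : ℕ) (θ : Fin n → Fin n → ℝ) (hf : Fin n → ℕ) (A : Finset (Fin n)) :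
    QOp n :=
  Matrix.of fun x y =>
    if ∀ j ∉ A, x j = y j then ∏ k ∈ A, mixFac (hf k) (alphaAngle n θ k x) (x k) (y k) else 0

/-- `Ω̄(𝒜)_𝐡 = (1/m) ∑_l P̄_l`. -/
noncomputable def OmegaBar (n m : ℕ) (θ : Fin n → Fin n → ℝ) (hf : Fin n → ℕ)
    (A : Fin m → Finset (Fin n)) : QOp n :=
  (m : ℂ)⁻¹ • ∑ l, PBar n θ hf (A l)

/-- `P̄_{l;h} = ∏_{k ∈ A_l} ((1/h) Q_{k;h} + (1 - 1/h) I)`, written out entrywise. -/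
noncomputable def PBarH (n : ℕ) (θ : Fin n → Fin n → ℝ) (h : ℕ) (A : Finset (Fin n)) : QOp n :=
  Matrix.of fun x y =>
    if ∀ j ∉ A, x j = y j then
      ∏ k ∈ A, mixFac h (alphaH h (alphaAngle n θ k x)) (x k) (y k) else 0

/-- `Ω̄_h(𝒜) = (1/m) ∑_l P̄_{l;h}`. -/
noncomputable def OmegaBarH (n m : ℕ) (θ : Fin n → Fin n → ℝ) (h : ℕ)
    (A : Fin m → Finset (Fin n)) : QOp n :=
  (m : ℂ)⁻¹ • ∑ l, PBarH n θ h (A l)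

/-- Index set for `N+1` copies of the `n`-qubit space. -/
abbrev BIdx (n N : ℕ) := Fin (N + 1) → QIdx n

/-- `(⊗_{j ≠ i} Ω) ⊗ I_i` acting on the `N+1` copies. -/
noncomputable def testAll (n N : ℕ) (Ω : QOp n) (i : Fin (N + 1)) :
    Matrix (BIdx n N) (BIdx n N) ℂ :=
  Matrix.of fun x y =>
    (if x i = y i then 1 else 0) * ∏ j ∈ Finset.univ.erase i, Ω (x j) (y j)

/-- Acceptance probability `p = (1/(N+1)) ∑_i Tr[((⊗_{j≠i} Ω) ⊗ I_i) ρ]` of the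
`N`-random sampling test of `Ω` on a state `ρ` of `N+1` copies. -/
noncomputable def acceptProb (n N : ℕ) (Ω : QOp n) (ρ : Matrix (BIdx n N) (BIdx n N) ℂ) : ℝ :=
  (((N : ℂ) + 1)⁻¹ * ∑ i, (testAll n N Ω i * ρ).trace).re

/-- Partial trace over all copies except copy `i`. -/
noncomputable def ptraceAt (n N : ℕ) (i : Fin (N + 1))
    (M : Matrix (BIdx n N) (BIdx n N) ℂ) : QOp n :=
  Matrix.of fun a b => ∑ x : BIdx n N, if x i = a then M x (Function.update x i b) else 0

/-- The conditional state of the remaining copy given that the test is passed: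
`σ = (1/((N+1)p)) ∑_i Tr_{j≠i}[((⊗_{j≠i} Ω) ⊗ I_i) ρ]`. -/
noncomputable def condState (n N : ℕ) (Ω : QOp n) (ρ : Matrix (BIdx n N) (BIdx n N) ℂ) :
    QOp n :=
  (((((N : ℝ) + 1) * acceptProb n N Ω ρ : ℝ) : ℂ))⁻¹ •
    ∑ i, ptraceAt n N i (testAll n N Ω i * ρ)

/-- The i.i.d. state `(|G⟩⟨G|)^{⊗(N+1)}`. -/
noncomputable def iidState (n N : ℕ) (θ : Fin n → Fin n → ℝ) :
    Matrix (BIdx n N) (BIdx n N) ℂ :=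
  Matrix.of fun x y => ∏ j, gVec n θ (x j) * star (gVec n θ (y j))



section Aux

theorem schur_bound {ι : Type*} [Fintype ι] [DecidableEq ι] (M : Matrix ι ι ℂ) (r : ℝ)
    (hr : 0 ≤ r) (hrow : ∀ i, ∑ j, ‖M i j‖ ≤ r) (hcol : ∀ j, ∑ i, ‖M i j‖ ≤ r) :
    opNorm M ≤ r := by
  refine ContinuousLinearMap.opNorm_le_bound _ hr (fun x => ?_)
  have hx : x = (WithLp.equiv 2 (ι → ℂ)).symm (WithLp.equiv 2 (ι → ℂ) x) := rfl
  rw [hx, WithLp.equiv_symm_apply, Matrix.toEuclideanCLM_toLp]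
  set v : ι → ℂ := WithLp.equiv 2 (ι → ℂ) x with hv
  rw [EuclideanSpace.norm_eq, EuclideanSpace.norm_eq]
  have key : ∑ i, ‖M.mulVec v i‖ ^ 2 ≤ r ^ 2 * ∑ j, ‖v j‖ ^ 2 := by
    have step1 : ∀ i, ‖M.mulVec v i‖ ^ 2 ≤ r * ∑ j, ‖M i j‖ * ‖v j‖ ^ 2 := by
      intro i
      have h1 : ‖M.mulVec v i‖ ≤ ∑ j, ‖M i j‖ * ‖v j‖ := by
        simpa [Matrix.mulVec, dotProduct] using norm_sum_le Finset.univ (fun j => M i j * v j)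
      have h2 : (∑ j, ‖M i j‖ * ‖v j‖) ^ 2 ≤
          (∑ j, ‖M i j‖) * ∑ j, ‖M i j‖ * ‖v j‖ ^ 2 := by
        refine Finset.sum_sq_le_sum_mul_sum_of_sq_eq_mul _ (fun j _ => norm_nonneg _)
          (fun j _ => mul_nonneg (norm_nonneg _) (sq_nonneg _)) (fun j _ => by ring)
      calc ‖M.mulVec v i‖ ^ 2 ≤ (∑ j, ‖M i j‖ * ‖v j‖) ^ 2 := by
            exact pow_le_pow_left₀ (norm_nonneg _) h1 2
        _ ≤ (∑ j, ‖M i j‖) * ∑ j, ‖M i j‖ * ‖v j‖ ^ 2 := h2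
        _ ≤ r * ∑ j, ‖M i j‖ * ‖v j‖ ^ 2 := by
            refine mul_le_mul_of_nonneg_right (hrow i) ?_
            exact Finset.sum_nonneg fun j _ => mul_nonneg (norm_nonneg _) (sq_nonneg _)
    calc ∑ i, ‖M.mulVec v i‖ ^ 2 ≤ ∑ i, r * ∑ j, ‖M i j‖ * ‖v j‖ ^ 2 :=
          Finset.sum_le_sum fun i _ => step1 i
      _ = r * ∑ j, (∑ i, ‖M i j‖) * ‖v j‖ ^ 2 := by
          rw [← Finset.mul_sum, Finset.sum_comm]
          simp_rw [← Finset.sum_mul]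
      _ ≤ r * ∑ j, r * ‖v j‖ ^ 2 := by
          refine mul_le_mul_of_nonneg_left (Finset.sum_le_sum fun j _ => ?_) hr
          exact mul_le_mul_of_nonneg_right (hcol j) (sq_nonneg _)
      _ = r ^ 2 * ∑ j, ‖v j‖ ^ 2 := by rw [← Finset.mul_sum]; ring
  calc Real.sqrt (∑ i, ‖M.mulVec v i‖ ^ 2) ≤ Real.sqrt (r ^ 2 * ∑ j, ‖v j‖ ^ 2) :=
        Real.sqrt_le_sqrt key
    _ = r * Real.sqrt (∑ j, ‖v j‖ ^ 2) := by
        rw [Real.sqrt_mul (sq_nonneg r), Real.sqrt_sq hr]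

theorem alphaH_close (h : ℕ) (hh : 1 ≤ h) (α : ℝ) :
    |alphaH h α - α| ≤ Real.pi / (2 * h) := by
  have hπ := Real.pi_pos
  have hh' : (0:ℝ) < h := by exact_mod_cast hh
  have h1 : (⌊(h : ℝ) * α / Real.pi + 1 / 2⌋ : ℝ) ≤ (h : ℝ) * α / Real.pi + 1 / 2 :=
    Int.floor_le _
  have h2 : (h : ℝ) * α / Real.pi + 1 / 2 - 1 < (⌊(h : ℝ) * α / Real.pi + 1 / 2⌋ : ℝ) :=
    Int.sub_one_lt_floor _
  set c : ℝ := (⌊(h : ℝ) * α / Real.pi + 1 / 2⌋ : ℝ) with hc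
  have key : |c - (h : ℝ) * α / Real.pi| ≤ 1 / 2 := by
    rw [abs_le]; constructor <;> linarith
  have heq : alphaH h α - α = (c - (h : ℝ) * α / Real.pi) * (Real.pi / h) := by
    rw [alphaH, ← hc]
    field_simp
  rw [heq, abs_mul, abs_of_pos (by positivity : (0:ℝ) < Real.pi / h)]
  calc |c - (h:ℝ) * α / Real.pi| * (Real.pi / h) ≤ (1/2) * (Real.pi / h) :=
        mul_le_mul_of_nonneg_right key (by positivity)
    _ = Real.pi / (2 * h) := by ring

theorem norm_exp_sub_exp (t s : ℝ) :
    ‖Complex.exp (Complex.I * t) - Complex.exp (Complex.I * s)‖ =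
      2 * |Real.sin ((t - s) / 2)| := by
  have hw : Complex.exp (Complex.I * t) - Complex.exp (Complex.I * s) =
      ((Real.cos t - Real.cos s : ℝ) : ℂ) + ((Real.sin t - Real.sin s : ℝ) : ℂ) * Complex.I := by
    rw [mul_comm Complex.I (t:ℂ), mul_comm Complex.I (s:ℂ), Complex.exp_mul_I,
      Complex.exp_mul_I]
    push_cast [← Complex.ofReal_cos, ← Complex.ofReal_sin]
    ring
  have hns : Complex.normSq (Complex.exp (Complex.I * t) - Complex.exp (Complex.I * s)) =
      2 - 2 * Real.cos (t - s) := by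
    rw [hw, Complex.normSq_add_mul_I, Real.cos_sub]
    nlinarith [Real.sin_sq_add_cos_sq t, Real.sin_sq_add_cos_sq s]
  rw [Complex.norm_def, hns, Real.abs_sin_half]
  rw [show (2:ℝ) - 2 * Real.cos (t - s) = 2 ^ 2 * ((1 - Real.cos (t - s)) / 2) by ring,
    Real.sqrt_mul (by positivity), Real.sqrt_sq (by norm_num)]

theorem abs_sin_le_sin {x c : ℝ} (h1 : |x| ≤ c) (h2 : c ≤ Real.pi / 2) :
    |Real.sin x| ≤ Real.sin c := by
  have hπ := Real.pi_pos
  have key : |Real.sin x| = Real.sin |x| := by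
    rcases le_or_gt 0 x with hx | hx
    · rw [_root_.abs_of_nonneg hx, _root_.abs_of_nonneg (α := ℝ)
        (Real.sin_nonneg_of_nonneg_of_le_pi hx (by rw [_root_.abs_of_nonneg hx] at h1; linarith))]
    · rw [abs_of_neg hx] at h1
      rw [abs_of_neg hx, Real.sin_neg, abs_of_nonpos (α := ℝ)]
      nlinarith [Real.sin_nonneg_of_nonneg_of_le_pi (by linarith : (0:ℝ) ≤ -x)
        (by linarith : -x ≤ Real.pi), Real.sin_neg x]
  rw [key]
  exact Real.sin_le_sin_of_le_of_le_pi_div_two (by linarith [abs_nonneg x]) h2 h1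

theorem phaseFac_diff (h : ℕ) (hh : 1 ≤ h) (α : ℝ) (b b' : Fin 2) :
    ‖phaseFac (alphaH h α) b b' - phaseFac α b b'‖ ≤
      Real.sin (Real.pi / (4 * h)) * (if b = b' then 0 else 1) := by
  have hπ := Real.pi_pos
  have hh' : (1:ℝ) ≤ h := by exact_mod_cast hh
  by_cases hbb : b = b'
  · simp [hbb, phaseFac]
  · simp only [hbb, if_false, mul_one]
    rw [phaseFac, phaseFac, ← mul_sub, norm_mul, norm_exp_sub_exp]
    have hd : |bR b - bR b'| = 1 := by
      fin_cases b <;> fin_cases b' <;> simp_all [bR] <;> norm_num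
    have hval : |(alphaH h α * (bR b - bR b') - α * (bR b - bR b')) / 2| ≤
        Real.pi / (4 * h) := by
      rw [show alphaH h α * (bR b - bR b') - α * (bR b - bR b')
          = (alphaH h α - α) * (bR b - bR b') by ring, abs_div, abs_mul, hd, mul_one]
      have := alphaH_close h hh α
      rw [show |(2:ℝ)| = 2 by norm_num]
      calc |alphaH h α - α| / 2 ≤ (Real.pi / (2 * h)) / 2 := by linarith
        _ = Real.pi / (4 * h) := by ring
    have hb : Real.pi / (4 * h) ≤ Real.pi / 2 := by
      rw [div_le_div_iff₀ (by positivity) (by norm_num)]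
      nlinarith
    have hsin := abs_sin_le_sin hval hb
    have h12 : ‖(1/2 : ℂ)‖ = 1/2 := by norm_num
    rw [h12]
    linarith

theorem prod_diff_bound {ι : Type*} [DecidableEq ι] (s : Finset ι) (a b : ι → ℂ)
    (ha : ∀ k ∈ s, ‖a k‖ ≤ 1/2) (hb : ∀ k ∈ s, ‖b k‖ ≤ 1/2) :
    ‖∏ k ∈ s, a k - ∏ k ∈ s, b k‖ ≤ ∑ k ∈ s, 2 * (1/2)^(s.card) * ‖a k - b k‖ := by
  revert ha hb
  induction s using Finset.induction_on with
  | empty => simp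
  | @insert k s' hk ih =>
    intro ha hb
    have ha' : ∀ j ∈ s', ‖a j‖ ≤ 1/2 := fun j hj => ha j (Finset.mem_insert_of_mem hj)
    have hb' : ∀ j ∈ s', ‖b j‖ ≤ 1/2 := fun j hj => hb j (Finset.mem_insert_of_mem hj)
    rw [Finset.prod_insert hk, Finset.prod_insert hk, Finset.sum_insert hk,
      Finset.card_insert_of_notMem hk]
    have hprodA : ‖∏ j ∈ s', a j‖ ≤ (1/2)^(s'.card) := by
      calc ‖∏ j ∈ s', a j‖ ≤ ∏ j ∈ s', ‖a j‖ := Finset.norm_prod_le _ _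
        _ ≤ ∏ _j ∈ s', (1/2 : ℝ) := Finset.prod_le_prod (fun j _ => norm_nonneg _) ha'
        _ = (1/2)^(s'.card) := Finset.prod_const _
    have step : ‖a k * ∏ j ∈ s', a j - b k * ∏ j ∈ s', b j‖ ≤
        ‖a k - b k‖ * ‖∏ j ∈ s', a j‖ + ‖b k‖ * ‖∏ j ∈ s', a j - ∏ j ∈ s', b j‖ := by
      calc ‖a k * ∏ j ∈ s', a j - b k * ∏ j ∈ s', b j‖
          = ‖(a k - b k) * ∏ j ∈ s', a j + b k * (∏ j ∈ s', a j - ∏ j ∈ s', b j)‖ := by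
            ring_nf
        _ ≤ ‖(a k - b k) * ∏ j ∈ s', a j‖ + ‖b k * (∏ j ∈ s', a j - ∏ j ∈ s', b j)‖ :=
            norm_add_le _ _
        _ = ‖a k - b k‖ * ‖∏ j ∈ s', a j‖ + ‖b k‖ * ‖∏ j ∈ s', a j - ∏ j ∈ s', b j‖ := by
            rw [norm_mul, norm_mul]
    have hIH := ih ha' hb'
    have hbk : ‖b k‖ ≤ 1/2 := hb k (Finset.mem_insert_self k s')
    calc ‖a k * ∏ j ∈ s', a j - b k * ∏ j ∈ s', b j‖
        ≤ ‖a k - b k‖ * ‖∏ j ∈ s', a j‖ + ‖b k‖ * ‖∏ j ∈ s', a j - ∏ j ∈ s', b j‖ := step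
      _ ≤ ‖a k - b k‖ * (1/2)^(s'.card) + (1/2) * (∑ j ∈ s', 2 * (1/2)^(s'.card) * ‖a j - b j‖) := by
          refine add_le_add (mul_le_mul_of_nonneg_left hprodA (norm_nonneg _)) ?_
          exact mul_le_mul hbk hIH (norm_nonneg _) (by norm_num)
      _ = 2 * (1/2)^(s'.card + 1) * ‖a k - b k‖ +
            ∑ j ∈ s', 2 * (1/2)^(s'.card + 1) * ‖a j - b j‖ := by
          rw [Finset.mul_sum, pow_succ]
          congr 1
          · ring
          · exact Finset.sum_congr rfl (fun j _ => by ring)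

-- counting lemma
theorem count_lemma (n : ℕ) (A : Finset (Fin n)) (k : Fin n) (hk : k ∈ A)
    (x : Fin n → Fin 2) :
    ∑ y : Fin n → Fin 2, (if ∀ j ∉ A, x j = y j then
        (if x k = y k then (0:ℝ) else 1) else 0) = 2 ^ (A.card - 1) := by
  classical
  set F : Fin n → Fin 2 → ℝ := fun j b =>
    (if j ∈ A then (if j = k then (if x k = b then (0:ℝ) else 1) else 1)
      else (if x j = b then 1 else 0)) with hF
  have key : ∀ y : Fin n → Fin 2,
      (if ∀ j ∉ A, x j = y j then (if x k = y k then (0:ℝ) else 1) else 0) =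
      ∏ j : Fin n, F j (y j) := by
    intro y
    simp only [hF]
    by_cases hcond : ∀ j ∉ A, x j = y j
    · rw [if_pos hcond, Finset.prod_eq_single k]
      · simp [hk]
      · intro j _ hjk
        by_cases hjA : j ∈ A
        · simp [hjA, hjk]
        · simp [hjA, hcond j hjA]
      · simp
    · rw [if_neg hcond]
      push_neg at hcond
      obtain ⟨j, hjA, hjx⟩ := hcond
      refine (Finset.prod_eq_zero (Finset.mem_univ j) ?_).symm
      simp [hjA, hjx]
  simp_rw [key]
  rw [← Fintype.prod_sum F]
  have hsum : ∀ j : Fin n, (∑ b : Fin 2, F j b) = if j ∈ A ∧ j ≠ k then 2 else 1 := by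
    intro j
    simp only [hF]
    by_cases hjA : j ∈ A <;> by_cases hjk : j = k
    · subst hjk
      simp only [hjA, if_true, ne_eq, not_true_eq_false, and_false, if_false,
        Fin.sum_univ_two]
      generalize x j = c
      fin_cases c <;> norm_num
    · simp [hjA, hjk, Fin.sum_univ_two]
    · subst hjk; exact absurd hk hjA
    · simp only [hjA, if_false, Fin.sum_univ_two, hjk]
      generalize x j = c
      fin_cases c <;> norm_num
  simp_rw [hsum]
  rw [Finset.prod_ite, Finset.prod_const, Finset.prod_const, one_pow, mul_one]
  congr 1
  have : Finset.univ.filter (fun j => j ∈ A ∧ j ≠ k) = A.erase k := by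
    ext j
    simp [Finset.mem_erase, and_comm]
  rw [this, Finset.card_erase_of_mem hk]


theorem norm_phaseFac (α : ℝ) (b b' : Fin 2) : ‖phaseFac α b b'‖ = 1/2 := by
  rw [phaseFac, norm_mul]
  have : ‖Complex.exp (Complex.I * ((α * (bR b - bR b') : ℝ) : ℂ))‖ = 1 := by
    rw [Complex.norm_exp]
    simp [Complex.mul_re]
  rw [this]
  norm_num

theorem entry_bound (n : ℕ) (θ : Fin n → Fin n → ℝ) (h : ℕ) (hh : 1 ≤ h)
    (A : Finset (Fin n)) (x y : QIdx n) :
    ‖(PopH n θ h A - Pop n θ A) x y‖ ≤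
      if ∀ j ∉ A, x j = y j then
        ∑ k ∈ A, 2 * (1/2)^(A.card) *
          (Real.sin (Real.pi / (4 * h)) * (if x k = y k then 0 else 1)) else 0 := by
  rw [Matrix.sub_apply, PopH, Pop, Matrix.of_apply, Matrix.of_apply]
  by_cases hcond : ∀ j ∉ A, x j = y j
  · rw [if_pos hcond, if_pos hcond, if_pos hcond]
    calc ‖(∏ k ∈ A, phaseFac (alphaH h (alphaAngle n θ k x)) (x k) (y k)) -
          ∏ k ∈ A, phaseFac (alphaAngle n θ k x) (x k) (y k)‖
        ≤ ∑ k ∈ A, 2 * (1/2)^(A.card) *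
            ‖phaseFac (alphaH h (alphaAngle n θ k x)) (x k) (y k) -
              phaseFac (alphaAngle n θ k x) (x k) (y k)‖ :=
          prod_diff_bound A _ _ (fun k _ => le_of_eq (norm_phaseFac _ _ _))
            (fun k _ => le_of_eq (norm_phaseFac _ _ _))
      _ ≤ ∑ k ∈ A, 2 * (1/2)^(A.card) *
            (Real.sin (Real.pi / (4 * h)) * (if x k = y k then 0 else 1)) := by
          refine Finset.sum_le_sum (fun k _ => ?_)
          exact mul_le_mul_of_nonneg_left (phaseFac_diff h hh _ _ _) (by positivity)
  · rw [if_neg hcond, if_neg hcond, if_neg hcond]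
    simp

theorem sin_q_nonneg (h : ℕ) (hh : 1 ≤ h) : 0 ≤ Real.sin (Real.pi / (4 * h)) := by
  have hπ := Real.pi_pos
  have hh' : (1:ℝ) ≤ h := by exact_mod_cast hh
  refine Real.sin_nonneg_of_nonneg_of_le_pi (by positivity) ?_
  rw [div_le_iff₀ (by positivity)]
  nlinarith

theorem count_lemma' (n : ℕ) (A : Finset (Fin n)) (k : Fin n) (hk : k ∈ A)
    (y : Fin n → Fin 2) :
    ∑ x : Fin n → Fin 2, (if ∀ j ∉ A, x j = y j then
        (if x k = y k then (0:ℝ) else 1) else 0) = 2 ^ (A.card - 1) := by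
  rw [← count_lemma n A k hk y]
  refine Finset.sum_congr rfl (fun x _ => ?_)
  have h1 : (∀ j ∉ A, x j = y j) ↔ (∀ j ∉ A, y j = x j) := by
    constructor <;> intro hp j hj <;> exact (hp j hj).symm
  have h2 : (x k = y k) ↔ (y k = x k) := eq_comm
  simp only [h1, h2]

theorem gen_sum_bound (n : ℕ) (h : ℕ) (hh : 1 ≤ h)
    (A : Finset (Fin n)) (hAne : A.Nonempty) (x : QIdx n) (f : QIdx n → ℝ)
    (entry : ∀ y : QIdx n, f y ≤
      if ∀ j ∉ A, x j = y j then
        ∑ k ∈ A, 2 * (1/2)^(A.card) *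
          (Real.sin (Real.pi / (4 * h)) * (if x k = y k then 0 else 1)) else 0) :
    ∑ y : QIdx n, f y ≤ (A.card : ℝ) * Real.sin (Real.pi / (4 * h)) := by
  have hsin := sin_q_nonneg h hh
  calc ∑ y : QIdx n, f y
      ≤ ∑ y : QIdx n, (if ∀ j ∉ A, x j = y j then
          ∑ k ∈ A, 2 * (1/2)^(A.card) *
            (Real.sin (Real.pi / (4 * h)) * (if x k = y k then 0 else 1)) else 0) :=
        Finset.sum_le_sum (fun y _ => entry y)
    _ = ∑ y : QIdx n, ∑ k ∈ A, (2 * (1/2)^(A.card) * Real.sin (Real.pi / (4 * h))) *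
          (if ∀ j ∉ A, x j = y j then (if x k = y k then (0:ℝ) else 1) else 0) := by
        refine Finset.sum_congr rfl (fun y _ => ?_)
        split
        · exact Finset.sum_congr rfl (fun k _ => by ring)
        · simp
    _ = ∑ k ∈ A, (2 * (1/2)^(A.card) * Real.sin (Real.pi / (4 * h))) *
          ∑ y : QIdx n, (if ∀ j ∉ A, x j = y j then (if x k = y k then (0:ℝ) else 1) else 0) := by
        rw [Finset.sum_comm]
        exact Finset.sum_congr rfl (fun k _ => by rw [Finset.mul_sum])
    _ = ∑ k ∈ A, (2 * (1/2)^(A.card) * Real.sin (Real.pi / (4 * h))) * 2 ^ (A.card - 1) := by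
        refine Finset.sum_congr rfl (fun k hkA => ?_)
        rw [count_lemma n A k hkA x]
    _ = ∑ k ∈ A, Real.sin (Real.pi / (4 * h)) := by
        refine Finset.sum_congr rfl (fun k _ => ?_)
        have hc : 1 ≤ A.card := Finset.card_pos.mpr hAne
        have h2 : (2:ℝ) * 2 ^ (A.card - 1) = 2 ^ (A.card) := by
          rw [← pow_succ']
          congr 1
          omega
        have heq : (2:ℝ) * (1/2)^(A.card) * Real.sin (Real.pi / (4 * h)) * 2 ^ (A.card - 1)
            = (2 * 2 ^ (A.card - 1)) * (1/2)^(A.card) * Real.sin (Real.pi / (4 * h)) := by ring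
        rw [heq, h2, one_div, inv_pow, mul_inv_cancel₀ (by positivity), one_mul]
    _ = (A.card : ℝ) * Real.sin (Real.pi / (4 * h)) := by
        rw [Finset.sum_const, nsmul_eq_mul]

theorem row_sum_bound (n : ℕ) (θ : Fin n → Fin n → ℝ) (h : ℕ) (hh : 1 ≤ h)
    (A : Finset (Fin n)) (hAne : A.Nonempty) (x : QIdx n) :
    ∑ y : QIdx n, ‖(PopH n θ h A - Pop n θ A) x y‖ ≤
      (A.card : ℝ) * Real.sin (Real.pi / (4 * h)) :=
  gen_sum_bound n h hh A hAne x _ (fun y => entry_bound n θ h hh A x y)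

theorem col_sum_bound (n : ℕ) (θ : Fin n → Fin n → ℝ) (h : ℕ) (hh : 1 ≤ h)
    (A : Finset (Fin n)) (hAne : A.Nonempty) (y : QIdx n) :
    ∑ x : QIdx n, ‖(PopH n θ h A - Pop n θ A) x y‖ ≤
      (A.card : ℝ) * Real.sin (Real.pi / (4 * h)) := by
  refine gen_sum_bound n h hh A hAne y (fun x => ‖(PopH n θ h A - Pop n θ A) x y‖)
    (fun x => ?_)
  have hb := entry_bound n θ h hh A x y
  have h1 : (∀ j ∉ A, x j = y j) ↔ (∀ j ∉ A, y j = x j) := by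
    constructor <;> intro hp j hj <;> exact (hp j hj).symm
  have h2 : ∀ k, ((if x k = y k then (0:ℝ) else 1) = (if y k = x k then (0:ℝ) else 1)) := by
    intro k
    simp only [eq_comm]
  calc ‖(PopH n θ h A - Pop n θ A) x y‖
      ≤ if ∀ j ∉ A, x j = y j then
          ∑ k ∈ A, 2 * (1/2)^(A.card) *
            (Real.sin (Real.pi / (4 * h)) * (if x k = y k then 0 else 1)) else 0 := hb
    _ = if ∀ j ∉ A, y j = x j then
          ∑ k ∈ A, 2 * (1/2)^(A.card) *
            (Real.sin (Real.pi / (4 * h)) * (if y k = x k then 0 else 1)) else 0 := by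
        simp only [h1]
        split
        · exact Finset.sum_congr rfl (fun k _ => by rw [h2 k])
        · rfl

end Aux

/-- `‖Ω_h(𝒜) - Ω(𝒜)‖ ≤ (∑_l |A_l|/m) sin(π/4h) = (n/m) sin(π/4h)`. -/
theorem opNorm_OmegaAH_sub_OmegaA
    (n m : ℕ) (hn : 1 ≤ n) (hm : 1 ≤ m)
    (G : SimpleGraph (Fin n)) (θ : Fin n → Fin n → ℝ)
    (hsym : ∀ j k, θ j k = θ k j)
    (hθ : ∀ j k, ¬ G.Adj j k → θ j k = 0)
    (A : Fin m → Finset (Fin n))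
    (hdisj : ∀ l l', l ≠ l' → Disjoint (A l) (A l'))
    (hcover : ∀ v : Fin n, ∃ l, v ∈ A l)
    (hne : ∀ l, (A l).Nonempty)
    (hind : ∀ l, ∀ j ∈ A l, ∀ k ∈ A l, ¬ G.Adj j k)
    (h : ℕ) (hh : 1 ≤ h) :
    opNorm (OmegaAH n m θ h A - OmegaA n m θ A) ≤
      ((∑ l, ((A l).card : ℝ)) / m) * Real.sin (Real.pi / (4 * h)) ∧
    (∑ l, ((A l).card : ℝ)) / m = (n : ℝ) / m := by
  classical
  have hsin := sin_q_nonneg h hh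
  have hm' : (0:ℝ) < m := by exact_mod_cast hm
  have hcard : (∑ l, ((A l).card : ℝ)) = n := by
    have hbi : Finset.univ.biUnion A = (Finset.univ : Finset (Fin n)) := by
      ext v
      simp only [Finset.mem_biUnion, Finset.mem_univ, true_and, iff_true]
      exact hcover v
    have h1 : ∑ l, (A l).card = n := by
      have h2 := Finset.card_biUnion
        (s := (Finset.univ : Finset (Fin m))) (t := A)
        (fun l _ l' _ hne' => hdisj l l' hne')
      rw [hbi] at h2
      simp only [Finset.card_univ, Fintype.card_fin] at h2
      exact h2.symm
    exact_mod_cast congrArg (fun k : ℕ => (k : ℝ)) h1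
  refine ⟨?_, by rw [hcard]⟩
  have hentry : ∀ x y : QIdx n, ‖(OmegaAH n m θ h A - OmegaA n m θ A) x y‖ ≤
      (m:ℝ)⁻¹ * ∑ l, ‖(PopH n θ h (A l) - Pop n θ (A l)) x y‖ := by
    intro x y
    have he : (OmegaAH n m θ h A - OmegaA n m θ A) x y =
        (m:ℂ)⁻¹ * ∑ l, ((PopH n θ h (A l) - Pop n θ (A l)) x y) := by
      simp only [OmegaAH, OmegaA, Matrix.sub_apply, Matrix.smul_apply, Matrix.sum_apply,
        smul_eq_mul, Matrix.sub_apply, ← mul_sub, Finset.sum_sub_distrib]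
    rw [he, norm_mul, norm_inv]
    have hmc : ‖((m:ℕ) : ℂ)‖ = (m : ℝ) := by
      simp
    rw [hmc]
    refine mul_le_mul_of_nonneg_left ?_ (by positivity)
    exact norm_sum_le _ _
  have hblock : ∀ x y : QIdx n, True := fun _ _ => trivial
  refine schur_bound _ _ ?_ ?_ ?_
  · refine mul_nonneg (div_nonneg ?_ (le_of_lt hm')) hsin
    exact Finset.sum_nonneg (fun l _ => by positivity)
  · intro x
    calc ∑ y : QIdx n, ‖(OmegaAH n m θ h A - OmegaA n m θ A) x y‖
        ≤ ∑ y : QIdx n, (m:ℝ)⁻¹ * ∑ l, ‖(PopH n θ h (A l) - Pop n θ (A l)) x y‖ :=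
          Finset.sum_le_sum (fun y _ => hentry x y)
      _ = (m:ℝ)⁻¹ * ∑ l, ∑ y : QIdx n, ‖(PopH n θ h (A l) - Pop n θ (A l)) x y‖ := by
          rw [← Finset.mul_sum, Finset.sum_comm]
      _ ≤ (m:ℝ)⁻¹ * ∑ l, ((A l).card : ℝ) * Real.sin (Real.pi / (4 * h)) := by
          refine mul_le_mul_of_nonneg_left (Finset.sum_le_sum (fun l _ => ?_)) (by positivity)
          exact row_sum_bound n θ h hh (A l) (hne l) x
      _ = (∑ l, ((A l).card : ℝ)) / m * Real.sin (Real.pi / (4 * h)) := by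
          rw [← Finset.sum_mul]
          field_simp
  · intro y
    calc ∑ x : QIdx n, ‖(OmegaAH n m θ h A - OmegaA n m θ A) x y‖
        ≤ ∑ x : QIdx n, (m:ℝ)⁻¹ * ∑ l, ‖(PopH n θ h (A l) - Pop n θ (A l)) x y‖ :=
          Finset.sum_le_sum (fun x _ => hentry x y)
      _ = (m:ℝ)⁻¹ * ∑ l, ∑ x : QIdx n, ‖(PopH n θ h (A l) - Pop n θ (A l)) x y‖ := by
          rw [← Finset.mul_sum, Finset.sum_comm]
      _ ≤ (m:ℝ)⁻¹ * ∑ l, ((A l).card : ℝ) * Real.sin (Real.pi / (4 * h)) := by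
          refine mul_le_mul_of_nonneg_left (Finset.sum_le_sum (fun l _ => ?_)) (by positivity)
          exact col_sum_bound n θ h hh (A l) (hne l) y
      _ = (∑ l, ((A l).card : ℝ)) / m * Real.sin (Real.pi / (4 * h)) := by
          rw [← Finset.sum_mul]
          field_simp

end
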